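/- Let p ≥ 1 and let ⟨·⟩ denote expectation with respect to a probability measure ν on [-1,1]^p, with θ¹, θ² independent samples from ν. Define R₁₂ = (1/p)·θ¹ᵀθ² and q = ⟨R₁₂⟩, and let λ = λ_max(⟨θθᵀ⟩ − ⟨θ⟩⟨θ⟩ᵀ) be the largest eigenvalue of the covariance matrix. Then (p/2)·⟨|R₁₂ − q|²⟩ ≤ λ ≤ p·√(⟨|R₁₂ − q|²⟩). -/

import Mathlib

open MeasureTheory

lemma bilin_cs {n : ℕ} (C : Matrix (Fin n) (Fin n) ℝ)
    (hsym : ∀ i j, C i j = C j i)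
    (hpsd : ∀ v : Fin n → ℝ, 0 ≤ ∑ i, ∑ j, v i * C i j * v j)
    (x y : Fin n → ℝ) :
    (∑ i, ∑ j, x i * C i j * y j) ^ 2 ≤
      (∑ i, ∑ j, x i * C i j * x j) * (∑ i, ∑ j, y i * C i j * y j) := by
  set Bxy := ∑ i, ∑ j, x i * C i j * y j with hBxy
  set Bxx := ∑ i, ∑ j, x i * C i j * x j with hBxx
  set Byy := ∑ i, ∑ j, y i * C i j * y j with hByy
  have hyx : (∑ i, ∑ j, y i * C i j * x j) = Bxy := by
    rw [Finset.sum_comm, hBxy]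
    exact Finset.sum_congr rfl fun i _ => Finset.sum_congr rfl fun j _ => by
      rw [hsym i j]; ring
  have key : ∀ t : ℝ, 0 ≤ Byy * (t * t) + (2 * Bxy) * t + Bxx := by
    intro t
    have h := hpsd (fun i => x i + t * y i)
    have expand : (∑ i, ∑ j, (x i + t * y i) * C i j * (x j + t * y j)) =
        Byy * (t * t) + (Bxy + ∑ i, ∑ j, y i * C i j * x j) * t + Bxx := by
      rw [hBxy, hBxx, hByy]
      simp only [Finset.sum_mul, ← Finset.sum_add_distrib]
      exact Finset.sum_congr rfl fun i _ =>
        Finset.sum_congr rfl fun j _ => by ring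
    rw [expand, hyx] at h
    calc (0:ℝ) ≤ Byy * (t*t) + (Bxy + Bxy) * t + Bxx := h
    _ = Byy * (t*t) + (2*Bxy)*t + Bxx := by ring
  have hd := discrim_le_zero key
  rw [discrim] at hd
  nlinarith [hd]

theorem stmt_7 (p : ℕ) (hp : 1 ≤ p) (ν : Measure (Fin p → ℝ))
    [IsProbabilityMeasure ν]
    (hsupp : ∀ᵐ θ ∂ν, ∀ i, |θ i| ≤ 1)
    (μ : Fin p → ℝ) (hμ : ∀ i, μ i = ∫ θ, θ i ∂ν)
    (C : Matrix (Fin p) (Fin p) ℝ)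
    (hC : ∀ i j, C i j = (∫ θ, θ i * θ j ∂ν) - μ i * μ j)
    (lam : ℝ)
    (hlam : lam = sSup {x : ℝ | ∃ v : Fin p → ℝ,
      (∑ i, v i ^ 2) = 1 ∧ x = ∑ i, ∑ j, v i * C i j * v j})
    (V : ℝ)
    (hV : V = (1 / (p : ℝ) ^ 2) *
        (∫ θ₁, ∫ θ₂, (∑ i, θ₁ i * θ₂ i) ^ 2 ∂ν ∂ν)
      - (1 / (p : ℝ) ^ 2) * (∑ i, μ i * μ i) ^ 2) :
    (p : ℝ) / 2 * V ≤ lam ∧ lam ≤ (p : ℝ) * Real.sqrt V := by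
  classical
  have hp0 : (0:ℝ) < p := by exact_mod_cast hp
  have hpne : (p:ℝ) ≠ 0 := ne_of_gt hp0
  -- integrability
  have hint1 : ∀ i : Fin p, Integrable (fun θ : Fin p → ℝ => θ i) ν := by
    intro i
    refine (integrable_const (1:ℝ)).mono' (measurable_pi_apply i).aestronglyMeasurable ?_
    filter_upwards [hsupp] with θ hθ
    simpa [Real.norm_eq_abs] using hθ i
  have hint2 : ∀ i j : Fin p, Integrable (fun θ : Fin p → ℝ => θ i * θ j) ν := by
    intro i j
    refine (integrable_const (1:ℝ)).mono'
      ((measurable_pi_apply i).mul (measurable_pi_apply j)).aestronglyMeasurable ?_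
    filter_upwards [hsupp] with θ hθ
    rw [Real.norm_eq_abs, abs_mul]
    exact mul_le_one₀ (hθ i) (abs_nonneg _) (hθ j)
  set M : Fin p → Fin p → ℝ := fun i j => ∫ θ, θ i * θ j ∂ν with hMdef
  have hCM : ∀ i j, C i j = M i j - μ i * μ j := fun i j => hC i j
  have hMsym : ∀ i j, M i j = M j i := by
    intro i j
    exact integral_congr_ae (Filter.Eventually.of_forall fun θ => mul_comm _ _)
  have hsym : ∀ i j, C i j = C j i := fun i j => by
    rw [hCM, hCM, hMsym i j]; ring
  -- quadratic form = variance
  have hsqfun : ∀ v : Fin p → ℝ, (fun θ : Fin p → ℝ => (∑ i, v i * θ i)^2)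
      = fun θ => ∑ i, ∑ j, (v i * v j) * (θ i * θ j) := by
    intro v; funext θ
    rw [sq, Finset.sum_mul_sum]
    exact Finset.sum_congr rfl fun i _ => Finset.sum_congr rfl fun j _ => by ring
  have hXint : ∀ v : Fin p → ℝ, Integrable (fun θ : Fin p → ℝ => ∑ i, v i * θ i) ν :=
    fun v => integrable_finset_sum _ fun i _ => (hint1 i).const_mul _
  have hX2int : ∀ v : Fin p → ℝ, Integrable (fun θ : Fin p → ℝ => (∑ i, v i * θ i)^2) ν := by
    intro v
    rw [hsqfun v]
    exact integrable_finset_sum _ fun i _ => integrable_finset_sum _ fun j _ =>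
      (hint2 i j).const_mul _
  have hIX : ∀ v : Fin p → ℝ, (∫ θ, ∑ i, v i * θ i ∂ν) = ∑ i, v i * μ i := by
    intro v
    rw [integral_finset_sum _ (fun i _ => (hint1 i).const_mul _)]
    exact Finset.sum_congr rfl fun i _ => by rw [integral_const_mul, ← hμ i]
  have hIX2 : ∀ v : Fin p → ℝ, (∫ θ, (∑ i, v i * θ i)^2 ∂ν) = ∑ i, ∑ j, (v i * v j) * M i j := by
    intro v
    rw [hsqfun v, integral_finset_sum _ (fun i _ => integrable_finset_sum _ fun j _ =>
      (hint2 i j).const_mul _)]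
    refine Finset.sum_congr rfl fun i _ => ?_
    rw [integral_finset_sum _ (fun j _ => (hint2 i j).const_mul _)]
    exact Finset.sum_congr rfl fun j _ => integral_const_mul _ _
  have quad_eq : ∀ v : Fin p → ℝ, (∑ i, ∑ j, v i * C i j * v j)
      = (∫ θ, (∑ i, v i * θ i)^2 ∂ν) - (∫ θ, ∑ i, v i * θ i ∂ν)^2 := by
    intro v
    rw [hIX2, hIX, sq, Finset.sum_mul_sum, ← Finset.sum_sub_distrib]
    refine Finset.sum_congr rfl fun i _ => ?_
    rw [← Finset.sum_sub_distrib]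
    refine Finset.sum_congr rfl fun j _ => ?_
    rw [hCM i j]; ring
  have hpsd : ∀ v : Fin p → ℝ, 0 ≤ ∑ i, ∑ j, v i * C i j * v j := by
    intro v
    rw [quad_eq v]
    set m := ∫ θ, ∑ i, v i * θ i ∂ν with hm
    have h0 : 0 ≤ ∫ θ, ((∑ i, v i * θ i) - m)^2 ∂ν := integral_nonneg fun θ => sq_nonneg _
    have hexp : (fun θ : Fin p → ℝ => ((∑ i, v i * θ i) - m)^2)
        = fun θ => ((∑ i, v i * θ i)^2 - (2*m) * (∑ i, v i * θ i)) + m^2 :=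
      funext fun θ => by ring
    have hsubint : Integrable
        (fun θ : Fin p → ℝ => (∑ i, v i * θ i)^2 - (2*m) * (∑ i, v i * θ i)) ν :=
      (hX2int v).sub ((hXint v).const_mul (2*m))
    have hmulint : Integrable (fun θ : Fin p → ℝ => (2*m) * (∑ i, v i * θ i)) ν :=
      (hXint v).const_mul (2*m)
    rw [hexp, integral_add hsubint (integrable_const _),
      integral_sub (hX2int v) hmulint, integral_const_mul, integral_const] at h0
    simp only [measure_univ, probReal_univ, ENNReal.toReal_one, one_smul, ← hm] at h0
    linarith [h0]
  -- the sup set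
  set Sset := {x : ℝ | ∃ v : Fin p → ℝ,
      (∑ i, v i ^ 2) = 1 ∧ x = ∑ i, ∑ j, v i * C i j * v j} with hSset
  set F := ∑ i, ∑ j, (C i j)^2 with hF
  have hub : ∀ x ∈ Sset, x ≤ Real.sqrt F := by
    rintro x ⟨v, hv1, rfl⟩
    have h1 : (∑ i, ∑ j, v i * C i j * v j)
        = ∑ z : Fin p × Fin p, (v z.1 * v z.2) * C z.1 z.2 := by
      rw [Fintype.sum_prod_type]
      exact Finset.sum_congr rfl fun i _ => Finset.sum_congr rfl fun j _ => by ring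
    have h2 := Finset.sum_mul_sq_le_sq_mul_sq Finset.univ
      (fun z : Fin p × Fin p => v z.1 * v z.2) (fun z => C z.1 z.2)
    have h3 : (∑ z : Fin p × Fin p, (v z.1 * v z.2)^2) = 1 := by
      rw [show (∑ z : Fin p × Fin p, (v z.1 * v z.2)^2) = ∑ i, ∑ j, v i ^2 * v j ^2 from by
        rw [Fintype.sum_prod_type]
        exact Finset.sum_congr rfl fun i _ => Finset.sum_congr rfl fun j _ => by ring]
      rw [← Finset.sum_mul_sum, hv1, one_mul]
    have h4 : (∑ z : Fin p × Fin p, (C z.1 z.2)^2) = F := by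
      rw [hF, Fintype.sum_prod_type]
    have h5 : (∑ z : Fin p × Fin p, (v z.1 * v z.2) * C z.1 z.2)^2 ≤ F := by
      calc (∑ z : Fin p × Fin p, (v z.1 * v z.2) * C z.1 z.2)^2
          ≤ (∑ z : Fin p × Fin p, (v z.1 * v z.2)^2) * ∑ z : Fin p × Fin p, (C z.1 z.2)^2 := h2
      _ = F := by rw [h3, h4, one_mul]
    rw [h1]
    calc (∑ z : Fin p × Fin p, (v z.1 * v z.2) * C z.1 z.2)
        ≤ |∑ z : Fin p × Fin p, (v z.1 * v z.2) * C z.1 z.2| := le_abs_self _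
    _ = Real.sqrt ((∑ z : Fin p × Fin p, (v z.1 * v z.2) * C z.1 z.2)^2) :=
        (Real.sqrt_sq_eq_abs _).symm
    _ ≤ Real.sqrt F := Real.sqrt_le_sqrt h5
  have hbdd : BddAbove Sset := ⟨_, hub⟩
  -- basis vectors
  set e : Fin p → Fin p → ℝ := fun k l => if l = k then 1 else 0 with he
  have he_sq : ∀ k, (∑ i, e k i ^ 2) = 1 := by
    intro k
    simp [he, apply_ite (fun x : ℝ => x ^ 2), Finset.sum_ite_eq']
  have hsingle : ∀ k, (∑ i, ∑ j, e k i * C i j * e k j) = C k k := by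
    intro k
    simp [he, mul_ite, ite_mul, Finset.sum_ite_eq']
  have hcollapse : ∀ (i k : Fin p), (∑ j, C i j * e k j) = C i k := by
    intro i k
    simp [he, mul_ite, Finset.sum_ite_eq']
  set i₀ : Fin p := ⟨0, hp⟩ with hi0
  have hmem : ∀ k, C k k ∈ Sset := fun k => ⟨e k, he_sq k, (hsingle k).symm⟩
  have hCkk_le : ∀ k, C k k ≤ lam := fun k => hlam ▸ le_csSup hbdd (hmem k)
  have hCkk_nonneg : ∀ k, 0 ≤ C k k := fun k => (hsingle k) ▸ hpsd (e k)
  have hlam0 : 0 ≤ lam := le_trans (hCkk_nonneg i₀) (hCkk_le i₀)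
  -- general quadratic form bound
  have hquad : ∀ v : Fin p → ℝ, (∑ i, ∑ j, v i * C i j * v j) ≤ lam * ∑ i, v i ^ 2 := by
    intro v
    by_cases hz : (∑ i, v i ^ 2) = 0
    · have hv0 : ∀ i, v i = 0 := by
        intro i
        have h := (Finset.sum_eq_zero_iff_of_nonneg
          (fun i _ => sq_nonneg (v i))).1 hz i (Finset.mem_univ i)
        exact pow_eq_zero_iff two_ne_zero |>.mp h
      have : (∑ i, ∑ j, v i * C i j * v j) = 0 :=
        Finset.sum_eq_zero fun i _ => Finset.sum_eq_zero fun j _ => by rw [hv0 i]; ring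
      rw [this, hz, mul_zero]
    · have hpos : 0 < ∑ i, v i ^ 2 :=
        lt_of_le_of_ne (Finset.sum_nonneg fun i _ => sq_nonneg _) (Ne.symm hz)
      set c := Real.sqrt (∑ i, v i ^ 2) with hc
      have hcpos : 0 < c := Real.sqrt_pos.mpr hpos
      have hc2 : c^2 = ∑ i, v i ^ 2 := Real.sq_sqrt hpos.le
      have hw : (∑ i, (v i / c) ^ 2) = 1 := by
        simp only [div_pow]
        rw [← Finset.sum_div, ← hc2, div_self (by positivity)]
      have hle : (∑ i, ∑ j, (v i / c) * C i j * (v j / c)) ≤ lam :=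
        hlam ▸ le_csSup hbdd ⟨fun i => v i / c, hw, rfl⟩
      have heq : (∑ i, ∑ j, (v i / c) * C i j * (v j / c))
          = (∑ i, ∑ j, v i * C i j * v j) / c^2 := by
        rw [Finset.sum_div]
        refine Finset.sum_congr rfl fun i _ => ?_
        rw [Finset.sum_div]
        refine Finset.sum_congr rfl fun j _ => ?_
        rw [sq]; ring
      rw [heq] at hle
      have := (div_le_iff₀ (by positivity : (0:ℝ) < c^2)).mp hle
      calc (∑ i, ∑ j, v i * C i j * v j) ≤ lam * c^2 := this
      _ = lam * ∑ i, v i ^ 2 := by rw [hc2]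
  -- ‖Cv‖² ≤ lam * vᵀCv
  have hCeig : ∀ v : Fin p → ℝ,
      (∑ i, (∑ j, C i j * v j)^2) ≤ lam * ∑ i, ∑ j, v i * C i j * v j := by
    intro v
    set x : Fin p → ℝ := fun i => ∑ j, C i j * v j with hx
    have hN : (∑ i, ∑ j, x i * C i j * v j) = ∑ i, (x i)^2 := by
      refine Finset.sum_congr rfl fun i _ => ?_
      calc (∑ j, x i * C i j * v j) = x i * ∑ j, C i j * v j := by
            rw [Finset.mul_sum]
            exact Finset.sum_congr rfl fun j _ => by ring
      _ = (x i)^2 := by rw [sq]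
    have hN0 : 0 ≤ ∑ i, (x i)^2 := Finset.sum_nonneg fun i _ => sq_nonneg _
    have hcs := bilin_cs C hsym hpsd x v
    rw [hN] at hcs
    have hBxx : (∑ i, ∑ j, x i * C i j * x j) ≤ lam * ∑ i, (x i)^2 := hquad x
    have hBvv0 : 0 ≤ ∑ i, ∑ j, v i * C i j * v j := hpsd v
    show (∑ i, (x i)^2) ≤ lam * ∑ i, ∑ j, v i * C i j * v j
    rcases eq_or_lt_of_le hN0 with h | h
    · rw [← h]; exact mul_nonneg hlam0 hBvv0
    · nlinarith [hcs, hBxx, hBvv0, h]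
  -- Frobenius ≤ lam * trace
  have hcol : ∀ k, (∑ i, (C i k)^2) ≤ lam * C k k := by
    intro k
    have h := hCeig (e k)
    calc (∑ i, (C i k)^2) = ∑ i, (∑ j, C i j * e k j)^2 :=
          Finset.sum_congr rfl fun i _ => by rw [hcollapse i k]
    _ ≤ lam * ∑ i, ∑ j, e k i * C i j * e k j := h
    _ = lam * C k k := by rw [hsingle k]
  have hFtr : F ≤ lam * ∑ k, C k k := by
    rw [hF, Finset.sum_comm, Finset.mul_sum]
    exact Finset.sum_le_sum fun k _ => hcol k
  -- diag and mean bounds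
  have hMii : ∀ i, M i i ≤ 1 := by
    intro i
    have hb : (fun θ : Fin p → ℝ => θ i * θ i) ≤ᵐ[ν] fun _ => (1:ℝ) := by
      filter_upwards [hsupp] with θ hθ
      calc θ i * θ i = |θ i| * |θ i| := (abs_mul_abs_self _).symm
      _ ≤ 1 := mul_le_one₀ (hθ i) (abs_nonneg _) (hθ i)
    have := integral_mono_ae (hint2 i i) (integrable_const 1) hb
    simpa [measure_univ] using this
  set S := ∑ i, μ i * μ i with hS
  have hS0 : 0 ≤ S := Finset.sum_nonneg fun i _ => mul_self_nonneg _
  have hSp : S ≤ (p:ℝ) := by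
    rw [hS]
    calc (∑ i, μ i * μ i) ≤ ∑ i : Fin p, (1:ℝ) := by
          refine Finset.sum_le_sum fun i _ => ?_
          have h := hCkk_nonneg i
          rw [hCM i i] at h
          linarith [hMii i]
    _ = (p:ℝ) := by simp
  have htr : (∑ k, C k k) ≤ (p:ℝ) - S := by
    rw [hS]
    calc (∑ k, C k k) ≤ ∑ k, (1 - μ k * μ k) := by
          refine Finset.sum_le_sum fun k _ => ?_
          rw [hCM k k]
          linarith [hMii k]
    _ = (p:ℝ) - ∑ k, μ k * μ k := by rw [Finset.sum_sub_distrib]; simp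
  set Q := ∑ i, ∑ j, μ i * C i j * μ j with hQ
  have hQ0 : 0 ≤ Q := hpsd μ
  have hQlam : Q ≤ lam * S := by
    calc Q ≤ lam * ∑ i, μ i ^ 2 := hquad μ
    _ = lam * S := by
        rw [hS]; congr 1
        exact Finset.sum_congr rfl fun i _ => pow_two (μ i)
  -- double integral identity
  have hinner : ∀ θ₁ : Fin p → ℝ,
      (∫ θ₂, (∑ i, θ₁ i * θ₂ i)^2 ∂ν) = ∑ i, ∑ j, (θ₁ i * θ₁ j) * M i j := by
    intro θ₁
    have hfun : (fun θ₂ : Fin p → ℝ => (∑ i, θ₁ i * θ₂ i)^2)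
        = fun θ₂ => ∑ i, ∑ j, (θ₁ i * θ₁ j) * (θ₂ i * θ₂ j) := by
      funext θ₂
      rw [sq, Finset.sum_mul_sum]
      exact Finset.sum_congr rfl fun i _ => Finset.sum_congr rfl fun j _ => by ring
    rw [hfun, integral_finset_sum _ (fun i _ => integrable_finset_sum _ fun j _ =>
      (hint2 i j).const_mul _)]
    refine Finset.sum_congr rfl fun i _ => ?_
    rw [integral_finset_sum _ (fun j _ => (hint2 i j).const_mul _)]
    exact Finset.sum_congr rfl fun j _ => integral_const_mul _ _
  have hD : (∫ θ₁, ∫ θ₂, (∑ i, θ₁ i * θ₂ i)^2 ∂ν ∂ν) = ∑ i, ∑ j, M i j * M i j := by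
    rw [show (fun θ₁ : Fin p → ℝ => ∫ θ₂, (∑ i, θ₁ i * θ₂ i)^2 ∂ν)
        = fun θ₁ => ∑ i, ∑ j, (θ₁ i * θ₁ j) * M i j from funext hinner]
    rw [integral_finset_sum _ (fun i _ => integrable_finset_sum _ fun j _ =>
      (hint2 i j).mul_const _)]
    refine Finset.sum_congr rfl fun i _ => ?_
    rw [integral_finset_sum _ (fun j _ => (hint2 i j).mul_const _)]
    exact Finset.sum_congr rfl fun j _ => integral_mul_const _ _
  have hT : (∑ i, ∑ j, M i j * M i j) = F + 2*Q + S*S := by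
    have h1 : ∀ i j, M i j * M i j
        = (C i j)^2 + 2*(μ i * C i j * μ j) + (μ i * μ i)*(μ j * μ j) := by
      intro i j
      have hM : M i j = C i j + μ i * μ j := by rw [hCM i j]; ring
      rw [hM]; ring
    calc (∑ i, ∑ j, M i j * M i j)
        = ∑ i, ∑ j, ((C i j)^2 + 2*(μ i * C i j * μ j) + (μ i * μ i)*(μ j * μ j)) :=
          Finset.sum_congr rfl fun i _ => Finset.sum_congr rfl fun j _ => h1 i j
    _ = F + 2*Q + S*S := by
        rw [hF, hQ, hS, Finset.sum_mul_sum]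
        simp only [Finset.mul_sum, ← Finset.sum_add_distrib]
  have hPV : (p:ℝ)^2 * V = F + 2*Q := by
    rw [hV, hD, hT]
    field_simp
    ring
  constructor
  · -- lower bound
    have h1 : F ≤ lam * ((p:ℝ) - S) := hFtr.trans (mul_le_mul_of_nonneg_left htr hlam0)
    have hlow : (p:ℝ)^2 * V ≤ 2*(p:ℝ)*lam := by
      rw [hPV]
      nlinarith [h1, hQlam, hSp, hlam0]
    nlinarith [hlow, hp0]
  · -- upper bound
    have hF0 : 0 ≤ F := Finset.sum_nonneg fun i _ => Finset.sum_nonneg fun j _ => sq_nonneg _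
    have hFp : F ≤ (p:ℝ)^2 * V := by rw [hPV]; linarith [hQ0]
    have hsqle : Real.sqrt F ≤ (p:ℝ) * Real.sqrt V := by
      calc Real.sqrt F ≤ Real.sqrt ((p:ℝ)^2 * V) := Real.sqrt_le_sqrt hFp
      _ = (p:ℝ) * Real.sqrt V := by
          rw [Real.sqrt_mul (by positivity), Real.sqrt_sq hp0.le]
    have hlamF : lam ≤ Real.sqrt F := by
      rw [hlam]
      exact csSup_le ⟨C i₀ i₀, hmem i₀⟩ hub
    exact hlamF.trans hsqle
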